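/- Let R be a unital associative ring and let a, b, c be finite index types. Let X be a square matrix over R indexed by a ⊕ b ⊕ c with blocks X_pq for p, q ∈ {a, b, c}. Assume X_cc is invertible, and that the bb-block of the Schur complement of X shortening c, namely Y_bb = X_bb − X_bc X_cc⁻¹ X_cb, is invertible. Then the (b ⊕ c)×(b ⊕ c) block W = [[X_bb, X_bc],[X_cb, X_cc]] is invertible, and the Schur complement of X shortening b ∪ c jointly equals the iterated Schur complement: X_aa − [X_ab, X_ac]·W⁻¹·[X_ba; X_ca] = Y_aa − Y_ab Y_bb⁻¹ Y_ba, where Y_aa = X_aa − X_ac X_cc⁻¹ X_ca, Y_ab = X_ab − X_ac X_cc⁻¹ X_cb, and Y_ba = X_ba − X_bc X_cc⁻¹ X_ca. -/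

import Mathlib

section Aux

open Matrix

open Matrix

variable {m n α : Type*} [Fintype m] [Fintype n] [DecidableEq m] [DecidableEq n] [Ring α]

theorem blockLeftInv (A : Matrix m m α) (B : Matrix m n α) (C : Matrix n m α)
    (D : Matrix n n α) (S : Matrix m m α) [Invertible D] [Invertible S]
    (hS : S = A - B * ⅟D * C) :
    fromBlocks (⅟S) (-(⅟S * B * ⅟D)) (-(⅟D * C * ⅟S)) (⅟D + ⅟D * C * ⅟S * B * ⅟D) *
      fromBlocks A B C D = 1 := by
  rw [fromBlocks_multiply, ← fromBlocks_one, fromBlocks_inj]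
  refine ⟨?_, ?_, ?_, ?_⟩
  · have h : ⅟S * A + -(⅟S * B * ⅟D) * C = ⅟S * (A - B * ⅟D * C) := by
      simp only [Matrix.mul_sub, Matrix.neg_mul, Matrix.mul_assoc]; abel
    rw [h, ← hS, invOf_mul_self]
  · simp only [Matrix.neg_mul, Matrix.mul_assoc, invOf_mul_self, Matrix.mul_one]
    abel
  · have h : -(⅟D * C * ⅟S) * A + (⅟D + ⅟D * C * ⅟S * B * ⅟D) * C =
        ⅟D * C - ⅟D * (C * (⅟S * (A - B * ⅟D * C))) := by
      simp only [Matrix.mul_sub, Matrix.sub_mul, Matrix.neg_mul, Matrix.add_mul,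
        Matrix.mul_assoc]
      abel
    rw [h, ← hS, invOf_mul_self, Matrix.mul_one, sub_self]
  · have h : -(⅟D * C * ⅟S) * B + (⅟D + ⅟D * C * ⅟S * B * ⅟D) * D =
        ⅟D * D + ⅟D * (C * (⅟S * (B * (⅟D * D)))) - ⅟D * (C * (⅟S * B)) := by
      simp only [Matrix.neg_mul, Matrix.add_mul, Matrix.mul_assoc]; abel
    rw [h, invOf_mul_self, Matrix.mul_one]
    abel

theorem blockRightInv (A : Matrix m m α) (B : Matrix m n α) (C : Matrix n m α)
    (D : Matrix n n α) (S : Matrix m m α) [Invertible D] [Invertible S]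
    (hS : S = A - B * ⅟D * C) :
    fromBlocks A B C D *
      fromBlocks (⅟S) (-(⅟S * B * ⅟D)) (-(⅟D * C * ⅟S)) (⅟D + ⅟D * C * ⅟S * B * ⅟D) = 1 := by
  rw [fromBlocks_multiply, ← fromBlocks_one, fromBlocks_inj]
  refine ⟨?_, ?_, ?_, ?_⟩
  · have h : A * ⅟S + B * -(⅟D * C * ⅟S) = (A - B * ⅟D * C) * ⅟S := by
      simp only [Matrix.sub_mul, Matrix.mul_neg, Matrix.mul_assoc]; abel
    rw [h, ← hS, mul_invOf_self]
  · have h : A * -(⅟S * B * ⅟D) + B * (⅟D + ⅟D * C * ⅟S * B * ⅟D) =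
        B * ⅟D - (A - B * ⅟D * C) * (⅟S * (B * ⅟D)) := by
      simp only [Matrix.sub_mul, Matrix.mul_neg, Matrix.mul_add, Matrix.mul_assoc]; abel
    rw [h, ← hS, ← Matrix.mul_assoc, mul_invOf_self, Matrix.one_mul, sub_self]
  · have h : C * ⅟S + D * -(⅟D * C * ⅟S) = C * ⅟S - D * ⅟D * (C * ⅟S) := by
      simp only [Matrix.mul_neg, Matrix.mul_assoc]; abel
    rw [h, mul_invOf_self, Matrix.one_mul, sub_self]
  · have h : C * -(⅟S * B * ⅟D) + D * (⅟D + ⅟D * C * ⅟S * B * ⅟D) =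
        D * ⅟D + D * ⅟D * (C * (⅟S * (B * ⅟D))) - C * (⅟S * (B * ⅟D)) := by
      simp only [Matrix.mul_neg, Matrix.mul_add, Matrix.mul_assoc]; abel
    rw [h, mul_invOf_self, Matrix.one_mul]
    abel

end Aux

/-- successive shortening property of the Schur complement:
shortening the union `b ∪ c` of index sets equals shortening first `c` and
then `b`. -/
theorem schur_complement_iterated
    {R : Type*} [Ring R]
    {a b c : Type*} [Fintype a] [Fintype b] [Fintype c]
    [DecidableEq a] [DecidableEq b] [DecidableEq c]
    (Xaa : Matrix a a R) (Xab : Matrix a b R) (Xac : Matrix a c R)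
    (Xba : Matrix b a R) (Xbb : Matrix b b R) (Xbc : Matrix b c R)
    (Xca : Matrix c a R) (Xcb : Matrix c b R) (Xcc : Matrix c c R)
    [Invertible Xcc]
    (Ybb : Matrix b b R) (hYbb : Ybb = Xbb - Xbc * ⅟Xcc * Xcb)
    [Invertible Ybb]
    (W : Matrix (b ⊕ c) (b ⊕ c) R) (hW : W = Matrix.fromBlocks Xbb Xbc Xcb Xcc)
    (Yaa : Matrix a a R) (hYaa : Yaa = Xaa - Xac * ⅟Xcc * Xca)
    (Yab : Matrix a b R) (hYab : Yab = Xab - Xac * ⅟Xcc * Xcb)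
    (Yba : Matrix b a R) (hYba : Yba = Xba - Xbc * ⅟Xcc * Xca) :
    IsUnit W ∧
      Xaa - Matrix.fromCols Xab Xac * Ring.inverse W * Matrix.fromRows Xba Xca =
        Yaa - Yab * ⅟Ybb * Yba := by
  subst hW hYaa hYab hYba
  set E : Matrix (b ⊕ c) (b ⊕ c) R :=
    Matrix.fromBlocks (⅟Ybb) (-(⅟Ybb * Xbc * ⅟Xcc)) (-(⅟Xcc * Xcb * ⅟Ybb))
      (⅟Xcc + ⅟Xcc * Xcb * ⅟Ybb * Xbc * ⅟Xcc) with hE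
  haveI hWi : Invertible (Matrix.fromBlocks Xbb Xbc Xcb Xcc) :=
    ⟨E, blockLeftInv Xbb Xbc Xcb Xcc Ybb hYbb, blockRightInv Xbb Xbc Xcb Xcc Ybb hYbb⟩
  refine ⟨isUnit_of_invertible _, ?_⟩
  have hinv : Ring.inverse (Matrix.fromBlocks Xbb Xbc Xcb Xcc) = E := by
    rw [Ring.inverse_invertible]
    exact invOf_eq_right_inv (blockRightInv Xbb Xbc Xcb Xcc Ybb hYbb)
  rw [hinv, hE, Matrix.fromCols_mul_fromBlocks, Matrix.fromCols_mul_fromRows]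
  simp only [Matrix.mul_neg, Matrix.neg_mul, Matrix.mul_add, Matrix.add_mul,
    Matrix.mul_sub, Matrix.sub_mul, Matrix.mul_assoc]
  abel
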